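/- Let θ12, θ13, θ23 be real numbers all lying in the interval [π/3, π/2]. Set α = (θ12 + θ13)/4, β = (θ12 − θ13)/4, c = θ23/4. Then tan(α + c)·tan(α − c)·tan(c + β)·tan(c − β) ≤ tan(3π/8)·tan(π/8)³, with equality when θ12 = θ13 = θ23 = π/2. -/

import Mathlib

open Real

private lemma sin_mul_sin' (x y : ℝ) :
    Real.sin x * Real.sin y = (Real.cos (x - y) - Real.cos (x + y)) / 2 := by
  rw [Real.cos_sub, Real.cos_add]; ring

private lemma cos_mul_cos' (x y : ℝ) :
    Real.cos x * Real.cos y = (Real.cos (x - y) + Real.cos (x + y)) / 2 := by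
  rw [Real.cos_sub, Real.cos_add]; ring

private lemma tan_prod (A B C D : ℝ) :
    Real.tan A * Real.tan B * Real.tan C * Real.tan D =
      (Real.sin A * Real.sin B * (Real.sin C * Real.sin D)) /
        (Real.cos A * Real.cos B * (Real.cos C * Real.cos D)) := by
  rw [Real.tan_eq_sin_div_cos, Real.tan_eq_sin_div_cos, Real.tan_eq_sin_div_cos,
    Real.tan_eq_sin_div_cos]
  rw [div_mul_div_comm, div_mul_div_comm, div_mul_div_comm]
  ring_nf

private lemma rhs_val : Real.tan (3 * π / 8) * Real.tan (π / 8) ^ 3 = 3 - 2 * Real.sqrt 2 := by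
  have h2 : (0:ℝ) ≤ 2 := by norm_num
  have hs2 : Real.sqrt 2 ^ 2 = 2 := Real.sq_sqrt h2
  have hs2le : Real.sqrt 2 ≤ 2 := by nlinarith [Real.sqrt_nonneg 2]
  have h38 : 3 * π / 8 = π / 2 - π / 8 := by ring
  rw [h38, Real.tan_pi_div_two_sub]
  have htpos : 0 < Real.tan (π / 8) := by
    apply Real.tan_pos_of_pos_of_lt_pi_div_two
    · positivity
    · nlinarith [Real.pi_pos]
  have ht : Real.tan (π / 8) ^ 2 = 3 - 2 * Real.sqrt 2 := by
    rw [Real.tan_eq_sin_div_cos, div_pow, Real.sin_pi_div_eight, Real.cos_pi_div_eight]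
    have h1 : Real.sqrt (2 - Real.sqrt 2) ^ 2 = 2 - Real.sqrt 2 :=
      Real.sq_sqrt (by nlinarith)
    have h2' : Real.sqrt (2 + Real.sqrt 2) ^ 2 = 2 + Real.sqrt 2 :=
      Real.sq_sqrt (by nlinarith [Real.sqrt_nonneg 2])
    have h2pos : (0:ℝ) < 2 + Real.sqrt 2 := by nlinarith [Real.sqrt_nonneg 2]
    rw [div_pow, div_pow, h1, h2']
    rw [div_div_div_cancel_right₀]
    · rw [div_eq_iff (ne_of_gt h2pos)]
      nlinarith [Real.sqrt_nonneg 2]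
    · norm_num
  have htne : Real.tan (π / 8) ≠ 0 := ne_of_gt htpos
  calc (Real.tan (π / 8))⁻¹ * Real.tan (π / 8) ^ 3
      = Real.tan (π / 8) ^ 2 := by
        field_simp
    _ = 3 - 2 * Real.sqrt 2 := ht

set_option maxHeartbeats 1000000 in
theorem lhuilier_upper_bound (θ12 θ13 θ23 : ℝ)
    (h12 : π / 3 ≤ θ12 ∧ θ12 ≤ π / 2) (h13 : π / 3 ≤ θ13 ∧ θ13 ≤ π / 2)
    (h23 : π / 3 ≤ θ23 ∧ θ23 ≤ π / 2) :
    tan ((θ12 + θ13) / 4 + θ23 / 4) * tan ((θ12 + θ13) / 4 - θ23 / 4) *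
      tan (θ23 / 4 + (θ12 - θ13) / 4) * tan (θ23 / 4 - (θ12 - θ13) / 4)
      ≤ tan (3 * π / 8) * tan (π / 8) ^ 3 ∧
    (θ12 = π / 2 → θ13 = π / 2 → θ23 = π / 2 →
      tan ((θ12 + θ13) / 4 + θ23 / 4) * tan ((θ12 + θ13) / 4 - θ23 / 4) *
      tan (θ23 / 4 + (θ12 - θ13) / 4) * tan (θ23 / 4 - (θ12 - θ13) / 4)
        = tan (3 * π / 8) * tan (π / 8) ^ 3) := by
  constructor
  · obtain ⟨ha1, ha2⟩ := h12
    obtain ⟨hb1, hb2⟩ := h13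
    obtain ⟨hc1, hc2⟩ := h23
    have hpi : (0:ℝ) < π := Real.pi_pos
    set s := Real.sqrt 2 with hsdef
    have hs0 : 0 ≤ s := Real.sqrt_nonneg 2
    have hs2 : s ^ 2 = 2 := Real.sq_sqrt (by norm_num)
    have hs1 : (1:ℝ) ≤ s := by nlinarith
    have hs32 : s ≤ 3 / 2 := by nlinarith
    set u := Real.cos ((θ12 + θ13) / 2) with hu
    set v := Real.cos (θ23 / 2) with hv
    set w := Real.cos ((θ12 - θ13) / 2) with hw
    -- bounds on u, v, w
    have hu0 : 0 ≤ u := by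
      apply Real.cos_nonneg_of_mem_Icc
      constructor <;> [linarith; linarith]
    have hv2 : s / 2 ≤ v := by
      rw [hv, hsdef, ← Real.cos_pi_div_four]
      exact Real.cos_le_cos_of_nonneg_of_le_pi (by linarith) (by linarith) (by linarith)
    have hvw : v ≤ w := by
      rw [hv, hw, ← Real.cos_abs ((θ12 - θ13) / 2)]
      apply Real.cos_le_cos_of_nonneg_of_le_pi (abs_nonneg _) (by linarith)
      rw [abs_le]
      constructor <;> linarith
    have hw1 : w ≤ 1 := Real.cos_le_one _
    have hv0 : 0 < v := by linarith
    have hvu : 0 ≤ v + u := by linarith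
    have hden : 0 < (v + u) * (w + v) := by nlinarith
    -- express the LHS as a ratio
    have hP : tan ((θ12 + θ13) / 4 + θ23 / 4) * tan ((θ12 + θ13) / 4 - θ23 / 4) *
        tan (θ23 / 4 + (θ12 - θ13) / 4) * tan (θ23 / 4 - (θ12 - θ13) / 4)
        = ((v - u) * (w - v)) / ((v + u) * (w + v)) := by
      rw [tan_prod, sin_mul_sin', sin_mul_sin', cos_mul_cos', cos_mul_cos']
      rw [show ((θ12 + θ13) / 4 + θ23 / 4) - ((θ12 + θ13) / 4 - θ23 / 4) = θ23 / 2 by ring]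
      rw [show ((θ12 + θ13) / 4 + θ23 / 4) + ((θ12 + θ13) / 4 - θ23 / 4) = (θ12 + θ13) / 2 by ring]
      rw [show (θ23 / 4 + (θ12 - θ13) / 4) - (θ23 / 4 - (θ12 - θ13) / 4) = (θ12 - θ13) / 2 by ring]
      rw [show (θ23 / 4 + (θ12 - θ13) / 4) + (θ23 / 4 - (θ12 - θ13) / 4) = θ23 / 2 by ring]
      rw [← hu, ← hv, ← hw]
      have hd1 : (v + u) / 2 * ((w + v) / 2) ≠ 0 := by
        have : 0 < (v + u) / 2 * ((w + v) / 2) := by nlinarith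
        exact ne_of_gt this
      rw [div_eq_div_iff hd1 (ne_of_gt hden)]
      ring
    rw [hP, rhs_val, ← hsdef, div_le_iff₀ hden]
    -- the key pointwise bound
    have e1 : 0 ≤ (4 - 2 * s) * (v - s / 2) :=
      mul_nonneg (by linarith) (by linarith)
    have e2 : 0 ≤ (2 * s - 2) * (1 - w) :=
      mul_nonneg (by linarith) (by linarith)
    have key : w - v ≤ (3 - 2 * s) * (w + v) := by nlinarith
    have m1 : (v - u) * (w - v) ≤ (v + u) * (w - v) := by
      nlinarith [mul_nonneg hu0 (sub_nonneg.2 hvw)]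
    have m2 : (v + u) * (w - v) ≤ (v + u) * ((3 - 2 * s) * (w + v)) :=
      mul_le_mul_of_nonneg_left key hvu
    nlinarith [m1, m2]
  · intro h1 h2 h3
    subst h1; subst h2; subst h3
    rw [show (π / 2 + π / 2) / 4 + π / 2 / 4 = 3 * π / 8 by ring]
    rw [show (π / 2 + π / 2) / 4 - π / 2 / 4 = π / 8 by ring]
    rw [show π / 2 / 4 + (π / 2 - π / 2) / 4 = π / 8 by ring]
    rw [show π / 2 / 4 - (π / 2 - π / 2) / 4 = π / 8 by ring]
    ring
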